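/- Let Γ be a countable residually finite discrete group, f ∈ ℤΓ invertible in ℓ¹(Γ) with inverse w_f^Δ = f⁻¹, and ξ = η ∘ ρ_{w_f^Δ} : ℓ∞(Γ,ℤ) → X_f. Then for every subgroup Γ' ≤ Γ of finite index, Fix_{Γ'}(X_f) = ξ(ℓ∞(Γ,ℤ)^{Γ'}), and the kernel of the restriction of ξ to ℓ∞(Γ,ℤ)^{Γ'} is ρ_f(ℓ∞(Γ,ℤ)^{Γ'}); in particular Fix_{Γ'}(X_f) is isomorphic as a group to ℓ∞(Γ,ℤ)^{Γ'}/ρ_f(ℓ∞(Γ,ℤ)^{Γ'}). -/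

import Mathlib

open scoped BigOperators symmDiff Pointwise

noncomputable section

/-- The additive circle `𝕋 = ℝ/ℤ`. -/
abbrev Torus : Type := AddCircle (1 : ℝ)

section GroupDefs

variable {Γ : Type*} [Group Γ]

/-- For `f ∈ ℤΓ`, the map `ρ_f : 𝕋^Γ → 𝕋^Γ`, `(ρ_f x)_{γ'} = Σ_γ f_γ • x_{γ'γ}`. -/
def rhoT (f : Γ →₀ ℤ) (x : Γ → Torus) : Γ → Torus :=
  fun γ' => f.sum fun γ c => c • x (γ' * γ)

/-- The compact abelian group `X_f = ker ρ_f ⊆ 𝕋^Γ` (as a subset). -/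
def XSet (f : Γ →₀ ℤ) : Set (Γ → Torus) := {x | rhoT f x = 0}

/-- The left shift `(λ^γ x)_{γ'} = x_{γ⁻¹ γ'}` on `𝕋^Γ`; restricted to `X_f` this is `α_f^γ`. -/
def lsh (γ : Γ) (x : Γ → Torus) : Γ → Torus := fun γ' => x (γ⁻¹ * γ')

/-- The left shift `(λ^γ w)_{γ'} = w_{γ⁻¹ γ'}` on real-valued functions. -/
def lshR (γ : Γ) (w : Γ → ℝ) : Γ → ℝ := fun γ' => w (γ⁻¹ * γ')

/-- Expansiveness of the `Γ`-action `α_f` on `X_f`: there is an open neighbourhood `U`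
of `0` such that the only point of `X_f` all of whose translates stay in `U` is `0`
(equivalently, `⋂_γ α_f^γ (U ∩ X_f) = {0}`). -/
def ExpansiveAction (f : Γ →₀ ℤ) : Prop :=
  ∃ U : Set (Γ → Torus), IsOpen U ∧ {x | x ∈ XSet f ∧ ∀ γ : Γ, lsh γ x ∈ U} = {0}

/-- `w ∈ ℓ∞(Γ)`: boundedness of a real-valued function. -/
def Bdd (w : Γ → ℝ) : Prop := ∃ C : ℝ, ∀ γ : Γ, |w γ| ≤ C

/-- `w ∈ ℓ∞(Γ,ℤ)`: all values are integers. -/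
def IntValued (w : Γ → ℝ) : Prop := ∀ γ : Γ, ∃ k : ℤ, w γ = (k : ℝ)

/-- For `f ∈ ℤΓ`, the operator `ρ_f` on `ℓ∞(Γ)`: `(ρ_f w)_γ = Σ_{γ'} w_{γγ'} f_{γ'}`. -/
def rhoInf (f : Γ →₀ ℤ) (w : Γ → ℝ) : Γ → ℝ :=
  fun γ => f.sum fun γ' c => (c : ℝ) * w (γ * γ')

/-- For `h ∈ ℓ¹(Γ)`, the operator `ρ_h` on `ℓ∞(Γ)`: `(ρ_h w)_γ = Σ_{γ'} w_{γγ'} h_{γ'}`. -/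
def rhoL1 (h : Γ → ℝ) (w : Γ → ℝ) : Γ → ℝ :=
  fun γ => ∑' γ' : Γ, w (γ * γ') * h γ'

/-- Convolution on `ℓ¹(Γ)`: `(g·h)_γ = Σ_{γ'} g_{γ'} h_{γ'⁻¹γ}`. -/
def conv (g h : Γ → ℝ) : Γ → ℝ := fun γ => ∑' γ' : Γ, g γ' * h (γ'⁻¹ * γ)

/-- Convolution on `ℓ¹(Γ,ℂ)`. -/
def convC (g h : Γ → ℂ) : Γ → ℂ := fun γ => ∑' γ' : Γ, g γ' * h (γ'⁻¹ * γ)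

open Classical in
/-- The unit `δ₁` of the convolution algebra `ℓ¹(Γ)`. -/
def deltaOne : Γ → ℝ := fun γ => if γ = 1 then 1 else 0

open Classical in
/-- The unit `δ₁` of `ℓ¹(Γ,ℂ)`. -/
def deltaOneC : Γ → ℂ := fun γ => if γ = 1 then 1 else 0

/-- `g` is a two-sided convolution inverse of `f` in `ℓ¹(Γ)`. -/
def IsL1Inverse (f g : Γ → ℝ) : Prop :=
  Summable g ∧ conv f g = deltaOne ∧ conv g f = deltaOne

/-- View `f ∈ ℤΓ` as an element of `ℓ¹(Γ)`. -/
def fR (f : Γ →₀ ℤ) : Γ → ℝ := fun γ => (f γ : ℝ)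

/-- View `f ∈ ℤΓ` as an element of `ℓ¹(Γ,ℂ)`. -/
def fCC (f : Γ →₀ ℤ) : Γ → ℂ := fun γ => (f γ : ℂ)

/-- The `ℓ¹`-norm `‖f‖₁` of `f ∈ ℤΓ`. -/
def finsuppL1 (f : Γ →₀ ℤ) : ℝ := f.sum fun _ c => |(c : ℝ)|

/-- The `ℓ¹`-norm of `h ∈ ℓ¹(Γ,ℂ)`. -/
def l1normC (h : Γ → ℂ) : ℝ := ∑' γ : Γ, ‖h γ‖

/-- Coordinatewise reduction mod 1, `η : ℓ∞(Γ) → 𝕋^Γ`. -/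
def etaT (w : Γ → ℝ) : Γ → Torus := fun γ => ((w γ : ℝ) : Torus)

/-- The map `ξ = η ∘ ρ_{w}` for `w ∈ ℓ¹(Γ)`. -/
def xiMap (w : Γ → ℝ) (v : Γ → ℝ) : Γ → Torus := etaT (rhoL1 w v)

/-- A point `x ∈ 𝕋^Γ` is homoclinic if `λ^γ x → 0` along the cofinite filter on `Γ`. -/
def IsHomoclinic (x : Γ → Torus) : Prop :=
  Filter.Tendsto (fun γ : Γ => lsh γ x) Filter.cofinite (nhds 0)

/-- The set of `Γ'`-fixed points of `α_f` in `X_f`. -/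
def FixSet (f : Γ →₀ ℤ) (Γ' : Subgroup Γ) : Set (Γ → Torus) :=
  {x | x ∈ XSet f ∧ ∀ γ ∈ Γ', lsh γ x = x}

/-- Left `(K,ε)`-invariance of a finite set `Q ⊆ Γ`. -/
def LeftInv [DecidableEq Γ] (K : Finset Γ) (ε : ℝ) (Q : Finset Γ) : Prop :=
  ∑ γ ∈ K, (((Q.image fun q => γ * q) ∆ Q).card : ℝ) / (Q.card : ℝ) < ε

/-- Right `(K,ε)`-invariance of a finite set `Q ⊆ Γ`. -/
def RightInv [DecidableEq Γ] (K : Finset Γ) (ε : ℝ) (Q : Finset Γ) : Prop :=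
  ∑ γ ∈ K, (((Q.image fun q => q * γ) ∆ Q).card : ℝ) / (Q.card : ℝ) < ε

/-- Amenability: existence of a left Følner sequence. -/
def Amenable (Γ : Type*) [Group Γ] [DecidableEq Γ] : Prop :=
  ∃ Q : ℕ → Finset Γ, (∀ n, (Q n).Nonempty) ∧
    ∀ (K : Finset Γ) (ε : ℝ), 0 < ε → ∃ N : ℕ, ∀ n ≥ N, LeftInv K ε (Q n)

/-- Residual finiteness: there is a sequence of finite-index normal subgroups with
trivial intersection. -/
def ResFinite (Γ : Type*) [Group Γ] : Prop :=
  ∃ N : ℕ → Subgroup Γ, (∀ n, (N n).Normal ∧ (N n).FiniteIndex) ∧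
    ∀ γ : Γ, (∀ n, γ ∈ N n) → γ = 1

/-- `Q` is a fundamental domain for the coset space `Γ/Γ'`:
`{γQ : γ ∈ Γ'}` is a partition of `Γ`. -/
def IsFundDomain (Γ' : Subgroup Γ) (Q : Finset Γ) : Prop :=
  ∀ x : Γ, ∃! p : Γ × Γ, p.1 ∈ Γ' ∧ p.2 ∈ Q ∧ p.1 * p.2 = x

/-- `lim_n Γ_n = {1}`: for every finite `K ⊆ Γ` eventually `Γ_n ∩ K⁻¹K = {1}`. -/
def LimTriv (N : ℕ → Subgroup Γ) : Prop :=
  ∀ K : Finset Γ, ∃ M : ℕ, ∀ n ≥ M, ∀ γ ∈ N n, (∃ a ∈ K, ∃ b ∈ K, γ = a⁻¹ * b) → γ = 1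

/-- The word ball `B_F(n)` of radius `n` with respect to a generating set `F`. -/
def BallF (F : Finset Γ) (n : ℕ) : Set Γ :=
  {γ | ∃ l : List Γ, l.length ≤ n ∧ (∀ a ∈ l, a ∈ F) ∧ l.prod = γ}

end GroupDefs

/-- The Hilbert space `ℓ²(Γ,ℂ)`. -/
abbrev H2 (Γ : Type*) : Type _ := lp (fun _ : Γ => ℂ) 2

section Hilbert

variable {Γ : Type*} [Group Γ]

open Classical in
/-- The standard basis vector `δ₁ ∈ ℓ²(Γ,ℂ)`. -/
def deltaL2 : H2 Γ := lp.single 2 (1 : Γ) (1 : ℂ)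

/-- `A` is the right-convolution operator `ρ_f` on `ℓ²(Γ,ℂ)`,
`(ρ_f w)_γ = Σ_{γ'} w_{γγ'} f_{γ'}`. -/
def IsRho (f : Γ → ℂ) (A : H2 Γ →L[ℂ] H2 Γ) : Prop :=
  ∀ (w : H2 Γ) (γ : Γ), (A w : Γ → ℂ) γ = ∑' γ' : Γ, (w : Γ → ℂ) (γ * γ') * f γ'

/-- The von Neumann trace of `log (A A*)`, i.e. `tr_{NΓ}(log (A A*)) = (log(AA*) δ₁)(1)`,
where `log` is given by the continuous functional calculus. -/
def trLogAAstar (A : H2 Γ →L[ℂ] H2 Γ) : ℝ :=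
  letI : Algebra ℝ (H2 Γ →L[ℂ] H2 Γ) := Algebra.complexToReal
  (((cfc Real.log (A * star A)) deltaL2 : Γ → ℂ) (1 : Γ)).re

/-- The Fuglede–Kadison determinant `det_{NΓ} A = exp(½ tr(log (A A*)))`. -/
def detFK (A : H2 Γ →L[ℂ] H2 Γ) : ℝ := Real.exp (2⁻¹ * trLogAAstar A)

open Classical in
/-- `f^{(n)} : Γ/Γ_n → ℂ`, integration along the fibres: `f^{(n)}(δ) = Σ_{γ ∈ δ} f_γ`. -/
def fQuot (f : Γ → ℂ) (H : Subgroup Γ) : (Γ ⧸ H) → ℂ :=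
  fun δ => ∑' γ : Γ, if (QuotientGroup.mk γ : Γ ⧸ H) = δ then f γ else 0

open Classical in
/-- The indicator of the identity coset in `ℓ²(Γ/Γ_n, ℂ)`. -/
def deltaQuot (H : Subgroup Γ) : (Γ ⧸ H) → ℂ :=
  fun δ => if δ = (QuotientGroup.mk (1 : Γ) : Γ ⧸ H) then 1 else 0

end Hilbert


section AuxLemmas

variable {Γ : Type*} [Group Γ]

/-- Lift from the torus to `[0,1)`. -/
def liftRealT (t : Torus) : ℝ :=
  haveI : Fact ((0:ℝ) < 1) := ⟨one_pos⟩
  (AddCircle.equivIco (1:ℝ) 0 t : ℝ)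

lemma liftRealT_coe (t : Torus) : ((liftRealT t : ℝ) : Torus) = t := by
  haveI : Fact ((0:ℝ) < 1) := ⟨one_pos⟩
  exact (AddCircle.equivIco (1:ℝ) 0).symm_apply_apply t

lemma liftRealT_abs_le (t : Torus) : |liftRealT t| ≤ 1 := by
  haveI : Fact ((0:ℝ) < 1) := ⟨one_pos⟩
  have h := (AddCircle.equivIco (1:ℝ) 0 t).2
  simp only [Set.mem_Ico, zero_add] at h
  unfold liftRealT
  rw [abs_of_nonneg h.1]; exact h.2.le

omit [Group Γ] in
lemma summable_bdd_mul {w V : Γ → ℝ} (hw : Summable w) {C : ℝ}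
    (hV : ∀ b, |V b| ≤ C) : Summable fun b => V b * w b := by
  rw [← summable_abs_iff]
  refine Summable.of_nonneg_of_le (fun b => abs_nonneg _) (fun b => ?_)
    ((summable_abs_iff.mpr hw).mul_left C)
  rw [abs_mul]
  exact mul_le_mul_of_nonneg_right (hV b) (abs_nonneg _)

lemma etaT_eq_zero_iff {y : Γ → ℝ} : etaT y = 0 ↔ IntValued y := by
  rw [funext_iff]
  refine forall_congr' fun γ => ?_
  simp only [etaT, Pi.zero_apply, AddCircle.coe_eq_zero_iff, IntValued]
  constructor
  · rintro ⟨n, hn⟩; exact ⟨n, by simpa using hn.symm⟩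
  · rintro ⟨k, hk⟩; exact ⟨k, by simp [hk]⟩

lemma rhoT_etaT (f : Γ →₀ ℤ) (y : Γ → ℝ) : rhoT f (etaT y) = etaT (rhoInf f y) := by
  funext γ
  simp only [rhoT, etaT, rhoInf, Finsupp.sum]
  have hmap : ((∑ x ∈ f.support, (f x : ℝ) * y (γ * x) : ℝ) : Torus)
      = ∑ x ∈ f.support, (((f x : ℝ) * y (γ * x) : ℝ) : Torus) :=
    map_sum (QuotientAddGroup.mk' (AddSubgroup.zmultiples (1:ℝ))) _ _
  rw [hmap]
  refine Finset.sum_congr rfl fun a _ => ?_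
  rw [← zsmul_eq_mul, AddCircle.coe_zsmul]

lemma lsh_etaT (γ : Γ) (y : Γ → ℝ) : lsh γ (etaT y) = etaT (lshR γ y) := rfl

lemma lshR_rhoL1 (w : Γ → ℝ) (γ : Γ) (v : Γ → ℝ) :
    rhoL1 w (lshR γ v) = lshR γ (rhoL1 w v) := by
  funext γ'
  simp only [rhoL1, lshR]
  exact tsum_congr fun b => by rw [mul_assoc]

lemma lshR_rhoInf (f : Γ →₀ ℤ) (γ : Γ) (y : Γ → ℝ) :
    rhoInf f (lshR γ y) = lshR γ (rhoInf f y) := by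
  funext γ'
  simp only [rhoInf, lshR]
  exact Finsupp.sum_congr fun a _ => by rw [mul_assoc]

lemma bdd_rhoL1 {w v : Γ → ℝ} (hw : Summable w) (hv : Bdd v) : Bdd (rhoL1 w v) := by
  obtain ⟨C, hC⟩ := hv
  refine ⟨C * ∑' b, |w b|, fun γ => ?_⟩
  have hsum : Summable fun b => v (γ * b) * w b := summable_bdd_mul hw (fun b => hC _)
  calc |rhoL1 w v γ| = ‖∑' b, v (γ * b) * w b‖ := by rw [Real.norm_eq_abs]; rfl
    _ ≤ ∑' b, ‖v (γ * b) * w b‖ := norm_tsum_le_tsum_norm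
        (by simpa only [Real.norm_eq_abs] using hsum.abs)
    _ ≤ ∑' b, C * |w b| := by
        refine Summable.tsum_le_tsum (fun b => ?_)
          (by simpa only [Real.norm_eq_abs] using hsum.abs)
          ((summable_abs_iff.mpr hw).mul_left C)
        rw [Real.norm_eq_abs, abs_mul]
        exact mul_le_mul_of_nonneg_right (hC _) (abs_nonneg _)
    _ = C * ∑' b, |w b| := tsum_mul_left

lemma bdd_rhoInf (f : Γ →₀ ℤ) {y : Γ → ℝ} (hy : Bdd y) : Bdd (rhoInf f y) := by
  obtain ⟨C, hC⟩ := hy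
  refine ⟨(f.sum fun _ c => |(c : ℝ)|) * C, fun γ => ?_⟩
  simp only [rhoInf, Finsupp.sum, Finset.sum_mul]
  calc |∑ a ∈ f.support, (f a : ℝ) * y (γ * a)|
      ≤ ∑ a ∈ f.support, |(f a : ℝ) * y (γ * a)| := Finset.abs_sum_le_sum_abs _ _
    _ ≤ ∑ a ∈ f.support, |(f a : ℝ)| * C := by
        refine Finset.sum_le_sum fun a _ => ?_
        rw [abs_mul]
        exact mul_le_mul_of_nonneg_left (hC _) (abs_nonneg _)

/-- `ρ_f ∘ ρ_w = id` on bounded functions when `f * w = δ₁`. -/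
lemma rhoInf_rhoL1 {f : Γ →₀ ℤ} {w : Γ → ℝ} (hw : Summable w)
    (hfw : conv (fR f) w = deltaOne) {v : Γ → ℝ} (hv : Bdd v) :
    rhoInf f (rhoL1 w v) = v := by
  obtain ⟨C, hC⟩ := hv
  funext γ
  have hsummand : ∀ a : Γ, Summable fun s => (f a : ℝ) * (v (γ * s) * w (a⁻¹ * s)) := by
    intro a
    have h1 : Summable fun b => ((f a : ℝ) * v (γ * a * b)) * w b :=
      summable_bdd_mul hw (C := |(f a : ℝ)| * C) fun b => by
        rw [abs_mul]
        exact mul_le_mul_of_nonneg_left (hC _) (abs_nonneg _)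
    have h2 := (Equiv.mulLeft (a⁻¹ : Γ)).summable_iff.mpr h1
    refine h2.congr fun s => ?_
    simp [Function.comp, Equiv.coe_mulLeft, mul_assoc]
  show (f.sum fun a c => (c : ℝ) * rhoL1 w v (γ * a)) = v γ
  rw [Finsupp.sum]
  calc ∑ a ∈ f.support, (f a : ℝ) * rhoL1 w v (γ * a)
      = ∑ a ∈ f.support, ∑' s, (f a : ℝ) * (v (γ * s) * w (a⁻¹ * s)) := by
        refine Finset.sum_congr rfl fun a _ => ?_
        rw [rhoL1, ← tsum_mul_left]
        rw [← (Equiv.mulLeft (a⁻¹ : Γ)).tsum_eq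
          (fun b => (f a : ℝ) * (v (γ * a * b) * w b))]
        refine tsum_congr fun s => ?_
        simp [Equiv.coe_mulLeft, mul_assoc]
    _ = ∑' s, ∑ a ∈ f.support, (f a : ℝ) * (v (γ * s) * w (a⁻¹ * s)) :=
        (Summable.tsum_finsetSum fun a _ => hsummand a).symm
    _ = ∑' s, v (γ * s) * deltaOne s := by
        refine tsum_congr fun s => ?_
        have hc : deltaOne s = ∑ a ∈ f.support, (f a : ℝ) * w (a⁻¹ * s) := by
          rw [← hfw]
          show (∑' c : Γ, fR f c * w (c⁻¹ * s)) = _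
          exact tsum_eq_sum fun a ha => by
            simp [fR, Finsupp.notMem_support_iff.mp ha]
        rw [hc, Finset.mul_sum]
        exact (Finset.sum_congr rfl fun a _ => by ring).symm
    _ = v γ := by
        rw [tsum_eq_single 1 (fun s hs => by simp [deltaOne, hs])]
        simp [deltaOne]

/-- `ρ_w ∘ ρ_f = id` on bounded functions when `w * f = δ₁`. -/
lemma rhoL1_rhoInf {f : Γ →₀ ℤ} {w : Γ → ℝ} (hw : Summable w)
    (hwf : conv w (fR f) = deltaOne) {u : Γ → ℝ} (hu : Bdd u) :
    rhoL1 w (rhoInf f u) = u := by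
  obtain ⟨C, hC⟩ := hu
  funext γ
  have hsum1 : ∀ a : Γ, Summable fun b => ((f a : ℝ) * u (γ * b * a)) * w b := fun a =>
    summable_bdd_mul hw (C := |(f a : ℝ)| * C) fun b => by
      rw [abs_mul]
      exact mul_le_mul_of_nonneg_left (hC _) (abs_nonneg _)
  have hsum2 : ∀ a : Γ, Summable fun s => ((f a : ℝ) * u (γ * s)) * w (s * a⁻¹) := by
    intro a
    have h2 := (Equiv.mulRight (a⁻¹ : Γ)).summable_iff.mpr (hsum1 a)
    refine h2.congr fun s => ?_
    simp [Function.comp, Equiv.coe_mulRight, mul_assoc]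
  show (∑' b, rhoInf f u (γ * b) * w b) = u γ
  calc ∑' b, rhoInf f u (γ * b) * w b
      = ∑' b, ∑ a ∈ f.support, ((f a : ℝ) * u (γ * b * a)) * w b := by
        refine tsum_congr fun b => ?_
        rw [rhoInf, Finsupp.sum, Finset.sum_mul]
    _ = ∑ a ∈ f.support, ∑' b, ((f a : ℝ) * u (γ * b * a)) * w b :=
        Summable.tsum_finsetSum fun a _ => hsum1 a
    _ = ∑ a ∈ f.support, ∑' s, ((f a : ℝ) * u (γ * s)) * w (s * a⁻¹) := by
        refine Finset.sum_congr rfl fun a _ => ?_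
        rw [← (Equiv.mulRight (a⁻¹ : Γ)).tsum_eq
          (fun b => ((f a : ℝ) * u (γ * b * a)) * w b)]
        refine tsum_congr fun s => ?_
        simp [Equiv.coe_mulRight, mul_assoc]
    _ = ∑' s, ∑ a ∈ f.support, ((f a : ℝ) * u (γ * s)) * w (s * a⁻¹) :=
        (Summable.tsum_finsetSum fun a _ => hsum2 a).symm
    _ = ∑' s, u (γ * s) * deltaOne s := by
        refine tsum_congr fun s => ?_
        have hc : deltaOne s = ∑ a ∈ f.support, w (s * a⁻¹) * (f a : ℝ) := by
          rw [← hwf]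
          show (∑' c : Γ, w c * fR f (c⁻¹ * s)) = _
          rw [← ((Equiv.inv Γ).trans (Equiv.mulLeft s)).tsum_eq
            (fun c => w c * fR f (c⁻¹ * s))]
          have heq : ∀ a : Γ, w (((Equiv.inv Γ).trans (Equiv.mulLeft s)) a) *
              fR f ((((Equiv.inv Γ).trans (Equiv.mulLeft s)) a)⁻¹ * s)
              = w (s * a⁻¹) * (f a : ℝ) := fun a => by
            simp [fR, Equiv.trans_apply, Equiv.inv_apply, Equiv.coe_mulLeft,
              mul_inv_rev, mul_assoc]
          simp only [heq]
          exact tsum_eq_sum fun a ha => by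
            simp [Finsupp.notMem_support_iff.mp ha]
        rw [hc, Finset.mul_sum]
        exact (Finset.sum_congr rfl fun a _ => by ring).symm
    _ = u γ := by
        rw [tsum_eq_single 1 (fun s hs => by simp [deltaOne, hs])]
        simp [deltaOne]

end AuxLemmas


/-- Let `Γ` be a countable residually finite discrete group, `f ∈ ℤΓ`
invertible in `ℓ¹(Γ)` with inverse `w = w_f^Δ`, and `ξ = η ∘ ρ_w`. For every
finite-index subgroup `Γ' ≤ Γ`, `Fix_{Γ'}(X_f) = ξ(ℓ∞(Γ,ℤ)^{Γ'})`, and the kernel of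
`ξ` restricted to `ℓ∞(Γ,ℤ)^{Γ'}` is `ρ_f(ℓ∞(Γ,ℤ)^{Γ'})` (so that `Fix_{Γ'}(X_f)` is
isomorphic to `ℓ∞(Γ,ℤ)^{Γ'}/ρ_f(ℓ∞(Γ,ℤ)^{Γ'})`). -/
theorem statement9 {Γ : Type*} [Group Γ] [Countable Γ] (hRF : ResFinite Γ)
    (f : Γ →₀ ℤ) (w : Γ → ℝ) (hw : IsL1Inverse (fR f) w)
    (Γ' : Subgroup Γ) (hΓ' : Γ'.FiniteIndex) :
    FixSet f Γ' = {x | ∃ v : Γ → ℝ,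
        (Bdd v ∧ IntValued v ∧ ∀ γ ∈ Γ', lshR γ v = v) ∧ xiMap w v = x} ∧
    ∀ v : Γ → ℝ, Bdd v → IntValued v → (∀ γ ∈ Γ', lshR γ v = v) →
      (xiMap w v = 0 ↔ ∃ u : Γ → ℝ,
        (Bdd u ∧ IntValued u ∧ ∀ γ ∈ Γ', lshR γ u = u) ∧ rhoInf f u = v) := by
  obtain ⟨hwS, hfw, hwf⟩ := hw
  constructor
  · ext x
    simp only [FixSet, Set.mem_setOf_eq]
    constructor
    · rintro ⟨hx, hfix⟩
      have hx0 : rhoT f x = 0 := hx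
      set y : Γ → ℝ := fun γ => liftRealT (x γ) with hy
      have hyb : Bdd y := ⟨1, fun γ => liftRealT_abs_le _⟩
      have hye : etaT y = x := funext fun γ => liftRealT_coe _
      have hyinv : ∀ γ ∈ Γ', lshR γ y = y := by
        intro γ hγ
        funext γ'
        exact congrArg liftRealT (congrFun (hfix γ hγ) γ')
      refine ⟨rhoInf f y, ⟨bdd_rhoInf f hyb, ?_, ?_⟩, ?_⟩
      · refine etaT_eq_zero_iff.mp ?_
        rw [← rhoT_etaT, hye]
        exact hx0
      · intro γ hγ
        rw [← lshR_rhoInf, hyinv γ hγ]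
      · show etaT (rhoL1 w (rhoInf f y)) = x
        rw [rhoL1_rhoInf hwS hwf hyb, hye]
    · rintro ⟨v, ⟨hvb, hvi, hvinv⟩, rfl⟩
      constructor
      · show rhoT f (etaT (rhoL1 w v)) = 0
        rw [rhoT_etaT, rhoInf_rhoL1 hwS hfw hvb]
        exact etaT_eq_zero_iff.mpr hvi
      · intro γ hγ
        show lsh γ (etaT (rhoL1 w v)) = _
        rw [lsh_etaT, ← lshR_rhoL1, hvinv γ hγ]
        rfl
  · intro v hvb hvi hvinv
    constructor
    · intro h0
      refine ⟨rhoL1 w v, ⟨bdd_rhoL1 hwS hvb, ?_, ?_⟩, rhoInf_rhoL1 hwS hfw hvb⟩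
      · exact etaT_eq_zero_iff.mp h0
      · intro γ hγ
        rw [← lshR_rhoL1, hvinv γ hγ]
    · rintro ⟨u, ⟨hub, hui, _⟩, rfl⟩
      show etaT (rhoL1 w (rhoInf f u)) = 0
      rw [rhoL1_rhoInf hwS hwf hub]
      exact etaT_eq_zero_iff.mpr hui

end
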